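/- For all integers m, l ≥ 1, Σ_{n=1}^∞ H_n^{(3)} / ((n+m)·C(n+m+l, l)) = Σ_{j=0}^{l−1} (−1)^j · C(l−1, j) · H_{m+j} / (m+j)³ + (1 / (m·C(m+l−1, l−1))) · { ζ(3) − (π²/6)·(H_{m+l−1} − H_{m−1}) }. -/

import Mathlib

open Finset Real

/-- The generalized harmonic number `H_n^{(p)} = ∑_{k=1}^n 1/k^p`. -/
noncomputable def gH (p : ℤ) (n : ℕ) : ℝ := ∑ k ∈ Finset.Icc 1 n, ((k : ℝ) ^ p)⁻¹

/-- The generalized hyperharmonic number `H_n^{(p,q)}`: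
`H_n^{(p,0)} = 1/n^p` (with `H_0^{(p,q)} = 0`) and
`H_n^{(p,q)} = ∑_{k=1}^n H_k^{(p,q-1)}` for `q ≥ 1`. -/
noncomputable def gHH (p : ℤ) : ℕ → ℕ → ℝ
  | 0, n => if n = 0 then 0 else ((n : ℝ) ^ p)⁻¹
  | q + 1, n => ∑ k ∈ Finset.Icc 1 n, gHH p q k

/-- Euler sum of generalized harmonic numbers `ζ_{H^{(p)}}(r) = ∑_{n≥1} H_n^{(p)}/n^r`. -/
noncomputable def eulerSum (p r : ℤ) : ℝ := ∑' n : ℕ+, gH p n / (n : ℝ) ^ r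

/-- Euler sum of generalized hyperharmonic numbers
`ζ_{H^{(p,q)}}(r) = ∑_{n≥1} H_n^{(p,q)}/n^r`. -/
noncomputable def eulerSumHH (p : ℤ) (q : ℕ) (r : ℤ) : ℝ := ∑' n : ℕ+, gHH p q n / (n : ℝ) ^ r

/-- Riemann zeta value at an integer argument, `ζ(s) = ∑_{n≥1} 1/n^s`. -/
noncomputable def zv (s : ℤ) : ℝ := ∑' n : ℕ+, ((n : ℝ) ^ s)⁻¹

/-- Unsigned Stirling numbers of the first kind, defined by
`x(x+1)⋯(x+q-1) = ∑_{k=0}^q [q,k] x^k`, i.e. `[n+1,k] = [n,k-1] + n·[n,k]`. -/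
def stirlingFirst : ℕ → ℕ → ℕ
  | 0, 0 => 1
  | 0, _ + 1 => 0
  | _ + 1, 0 => 0
  | n + 1, k + 1 => stirlingFirst n k + n * stirlingFirst n (k + 1)

/-- The series `μ(r,j) = ∑_{n≥1} 1/(n^r (n+j))`. -/
noncomputable def mu (r j : ℕ) : ℝ := ∑' n : ℕ+, 1 / ((n : ℝ) ^ r * ((n : ℝ) + j))

/-- `e_j(n+1, n+2, …, n+q)`: the `j`-th elementary symmetric polynomial
evaluated at the numbers `n+1, …, n+q`. -/
noncomputable def esymmVal (n q j : ℕ) : ℝ :=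
  ∑ s ∈ Finset.powersetCard j (Finset.Icc 1 q), ∏ i ∈ s, ((n : ℝ) + i)

namespace Stmt12Aux

open Filter Topology


/-- `F b L = L! * b! / (b+1+L)!`, i.e. `1/((b+1) * C(b+1+L, L))`. -/
noncomputable def F (b L : ℕ) : ℝ :=
  (Nat.factorial L : ℝ) * (Nat.factorial b) / (Nat.factorial (b + 1 + L))

lemma F_nonneg (b L : ℕ) : 0 ≤ F b L := by
  unfold F; positivity

lemma fact_cast (b L : ℕ) :
    (((b + 1 + L).choose L : ℝ)) * (Nat.factorial L : ℝ) * ((b:ℝ) + 1) * (Nat.factorial b : ℝ)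
      = (Nat.factorial (b + 1 + L) : ℝ) := by
  have h := Nat.choose_mul_factorial_mul_factorial (show L ≤ b + 1 + L by omega)
  rw [show b + 1 + L - L = b + 1 by omega] at h
  have : ((b + 1 + L).choose L * Nat.factorial L * Nat.factorial (b+1) : ℕ)
      = (Nat.factorial (b + 1 + L) : ℕ) := h
  have h2 := congrArg (fun n : ℕ => (n : ℝ)) this
  push_cast [Nat.factorial_succ] at h2
  linarith [h2]

lemma inv_eq_F (b L : ℕ) :
    (((b:ℝ) + 1) * (((b + 1 + L).choose L : ℕ) : ℝ))⁻¹ = F b L := by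
  have h := fact_cast b L
  have h1 : (0:ℝ) < Nat.factorial (b + 1 + L) := by positivity
  have h2 : (0:ℝ) < ((b + 1 + L).choose L : ℝ) := by
    exact_mod_cast Nat.choose_pos (show L ≤ b + 1 + L by omega)
  rw [F, eq_div_iff (ne_of_gt h1), inv_mul_eq_iff_eq_mul₀ (by positivity)]
  nlinarith [h]

lemma F_succ (b L : ℕ) : F b (L + 1) = F b L - F (b + 1) L := by
  unfold F
  have e1 : (b + 1 + (L + 1)) = (b + 1 + L) + 1 := by omega
  have e2 : (b + 1 + 1 + L) = (b + 1 + L) + 1 := by omega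
  rw [e1, e2, Nat.factorial_succ, Nat.factorial_succ (b+1+L)]
  push_cast [Nat.factorial_succ]
  have h1 : (0:ℝ) < Nat.factorial (b + 1 + L) := by positivity
  field_simp
  ring

lemma F_le (b L : ℕ) : F b L ≤ ((b:ℝ) + 1)⁻¹ := by
  rw [← inv_eq_F]
  have h2 : (1:ℝ) ≤ ((b + 1 + L).choose L : ℝ) := by
    exact_mod_cast Nat.choose_pos (show L ≤ b + 1 + L by omega)
  apply inv_anti₀ (by positivity)
  nlinarith

lemma prod_cast (b : ℕ) : ∀ n : ℕ, ∏ j ∈ range n, ((b:ℝ) + 1 + j)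
    = (Nat.factorial (b + n) : ℝ) / (Nat.factorial b : ℝ)
  | 0 => by
    simp [div_self (by positivity : (Nat.factorial b : ℝ) ≠ 0)]
  | n + 1 => by
    rw [Finset.prod_range_succ, prod_cast b n, show b + (n+1) = (b + n) + 1 by omega,
      Nat.factorial_succ]
    have h1 : (0:ℝ) < Nat.factorial b := by positivity
    push_cast
    field_simp
    ring

lemma F_eq_prod (b L : ℕ) :
    F b L = (Nat.factorial L : ℝ) / ∏ j ∈ range (L + 1), ((b:ℝ) + 1 + j) := by
  rw [prod_cast, F, show b + (L + 1) = b + 1 + L by omega]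
  have h1 : (0:ℝ) < Nat.factorial b := by positivity
  have h2 : (0:ℝ) < Nat.factorial (b + 1 + L) := by positivity
  field_simp



lemma sum_pascal (L : ℕ) (f : ℕ → ℝ) :
    ∑ j ∈ range (L + 2), (-1:ℝ)^j * (((L+1).choose j : ℕ) : ℝ) * f j
      = ∑ j ∈ range (L + 1), (-1:ℝ)^j * ((L.choose j : ℕ) : ℝ) * f j
        - ∑ j ∈ range (L + 1), (-1:ℝ)^j * ((L.choose j : ℕ) : ℝ) * f (j+1) := by
  set g : ℕ → ℝ := fun j => (-1:ℝ)^j * ((L.choose j : ℕ) : ℝ) * f j with hg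
  have hA := Finset.sum_range_succ' g (L+1)
  have hB := Finset.sum_range_succ g (L+1)
  have hg0 : g 0 = f 0 := by simp [hg]
  have hgL : g (L+1) = 0 := by simp [hg, Nat.choose_succ_self]
  have h2 : ∑ j ∈ range (L+1), g (j+1) = ∑ j ∈ range (L+1), g j - f 0 := by
    rw [← hg0]; rw [hB, hgL] at hA; linarith
  rw [Finset.sum_range_succ' (fun j => (-1:ℝ)^j * (((L+1).choose j : ℕ) : ℝ) * f j) (L+1)]
  have expand : ∀ j ∈ range (L+1),
      (-1:ℝ)^(j+1) * (((L+1).choose (j+1) : ℕ) : ℝ) * f (j+1)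
        = (-((-1:ℝ)^j * ((L.choose j : ℕ) : ℝ) * f (j+1))) + g (j+1) := by
    intro j _
    have : (((L+1).choose (j+1) : ℕ) : ℝ) = ((L.choose j : ℕ) : ℝ) + ((L.choose (j+1) : ℕ) : ℝ) := by
      exact_mod_cast congrArg (fun n : ℕ => (n:ℝ)) (Nat.choose_succ_succ L j)
    rw [this, hg]
    push_cast
    ring
  rw [Finset.sum_congr rfl expand, Finset.sum_add_distrib, h2]
  simp [hg]
  ring

lemma prod_pos' (n : ℕ) (x : ℝ) (hx : 0 < x) : 0 < ∏ j ∈ range n, (x + j) := by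
  apply Finset.prod_pos
  intro i _
  positivity

lemma PF1 : ∀ (L : ℕ) (x : ℝ), 0 < x →
    ∑ j ∈ range (L + 1), (-1:ℝ)^j * ((L.choose j : ℕ) : ℝ) * (x + j)⁻¹
      = (Nat.factorial L : ℝ) / ∏ j ∈ range (L + 1), (x + j) := by
  intro L
  induction L with
  | zero => intro x hx; simp
  | succ L ih =>
    intro x hx
    have key := sum_pascal L (fun j => (x + (j:ℕ))⁻¹)
    have hshift : ∀ j ∈ range (L+1), (-1:ℝ)^j * ((L.choose j : ℕ) : ℝ) * (x + ((j+1:ℕ):ℝ))⁻¹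
        = (-1:ℝ)^j * ((L.choose j : ℕ) : ℝ) * ((x+1) + (j:ℝ))⁻¹ := by
      intro j _
      have hx1 : x + ((j+1:ℕ):ℝ) = x + 1 + j := by push_cast; ring
      rw [hx1]
    rw [Finset.sum_congr rfl hshift] at key
    rw [show L + 1 + 1 = L + 2 by omega, key, ih x hx, ih (x+1) (by linarith)]
    set A := ∏ j ∈ range (L + 1), (x + j) with hA
    set B := ∏ j ∈ range (L + 1), (x + 1 + j) with hB
    set C := ∏ j ∈ range (L + 2), (x + j) with hC
    have hC1 : C = A * (x + (L+1)) := by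
      rw [hC, hA, Finset.prod_range_succ]; push_cast; ring
    have hC2 : C = B * x := by
      rw [hC, hB, Finset.prod_range_succ' (fun j => (x + (j:ℕ)))]
      push_cast
      rw [add_zero]
      congr 1
      apply Finset.prod_congr rfl
      intro j _; ring
    have hA0 : (0:ℝ) < A := prod_pos' _ x hx
    have hB0 : (0:ℝ) < B := prod_pos' _ (x+1) (by linarith)
    have hC0 : (0:ℝ) < C := prod_pos' _ x hx
    rw [Nat.factorial_succ]
    push_cast
    field_simp
    linear_combination B * hC1 - A * hC2

lemma PF2 : ∀ (L : ℕ) (x : ℝ), 0 < x →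
    ∑ j ∈ range (L + 1), (-1:ℝ)^j * ((L.choose j : ℕ) : ℝ) * ((x + j)^2)⁻¹
      = ((Nat.factorial L : ℝ) / ∏ j ∈ range (L + 1), (x + j))
          * ∑ i ∈ range (L + 1), (x + i)⁻¹ := by
  intro L
  induction L with
  | zero => intro x hx; simp [sq]
  | succ L ih =>
    intro x hx
    have key := sum_pascal L (fun j => ((x + (j:ℕ))^2)⁻¹)
    have hshift : ∀ j ∈ range (L+1), (-1:ℝ)^j * ((L.choose j : ℕ) : ℝ) * ((x + ((j+1:ℕ):ℝ))^2)⁻¹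
        = (-1:ℝ)^j * ((L.choose j : ℕ) : ℝ) * (((x+1) + (j:ℝ))^2)⁻¹ := by
      intro j _
      have hx1 : x + ((j+1:ℕ):ℝ) = x + 1 + j := by push_cast; ring
      rw [hx1]
    rw [Finset.sum_congr rfl hshift] at key
    rw [show L + 1 + 1 = L + 2 by omega, key, ih x hx, ih (x+1) (by linarith)]
    set A := ∏ j ∈ range (L + 1), (x + j) with hA
    set B := ∏ j ∈ range (L + 1), (x + 1 + j) with hB
    set C := ∏ j ∈ range (L + 2), (x + j) with hC
    set sC := ∑ i ∈ range (L + 2), (x + i)⁻¹ with hsC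
    have hC1 : C = A * (x + (L+1)) := by
      rw [hC, hA, Finset.prod_range_succ]; push_cast; ring
    have hC2 : C = B * x := by
      rw [hC, hB, Finset.prod_range_succ' (fun j => (x + (j:ℕ)))]
      push_cast
      rw [add_zero]
      congr 1
      apply Finset.prod_congr rfl
      intro j _; ring
    have hs1 : ∑ i ∈ range (L + 1), (x + i)⁻¹ = sC - (x + (L+1))⁻¹ := by
      rw [hsC, Finset.sum_range_succ (fun i => (x + (i:ℕ))⁻¹) (L+1)]; push_cast; ring
    have hs2 : ∑ i ∈ range (L + 1), (x + 1 + i)⁻¹ = sC - x⁻¹ := by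
      rw [hsC, Finset.sum_range_succ' (fun i => (x + (i:ℕ))⁻¹)]
      push_cast
      rw [show (∑ i ∈ range (L+1), (x + ((i:ℝ)+1))⁻¹) = ∑ i ∈ range (L+1), (x + 1 + (i:ℝ))⁻¹ from
        Finset.sum_congr rfl (fun i _ => by ring_nf)]
      ring
    have hA0 : (0:ℝ) < A := prod_pos' _ x hx
    have hB0 : (0:ℝ) < B := prod_pos' _ (x+1) (by linarith)
    have hC0 : (0:ℝ) < C := prod_pos' _ x hx
    have hxL : (0:ℝ) < x + (L+1) := by linarith
    rw [hs1, hs2, Nat.factorial_succ]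
    push_cast
    have eA : (Nat.factorial L : ℝ) / A = (Nat.factorial L : ℝ) * (x + (L+1)) / C := by
      rw [hC1]; field_simp
    have eB : (Nat.factorial L : ℝ) / B = (Nat.factorial L : ℝ) * x / C := by
      rw [hC2]; field_simp
    rw [eA, eB]
    field_simp
    ring



lemma gH_range (p : ℤ) (n : ℕ) : gH p n = ∑ i ∈ range n, (((i:ℝ) + 1) ^ p)⁻¹ := by
  rw [gH, ← Finset.Ico_add_one_right_eq_Icc, Finset.sum_Ico_eq_sum_range]
  refine Finset.sum_congr rfl fun i _ => ?_
  push_cast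
  rw [add_comm 1 (i:ℝ)]

lemma gH3_range (n : ℕ) : gH 3 n = ∑ i ∈ range n, ((((i:ℝ) + 1)) ^ (3:ℕ))⁻¹ := by
  rw [gH_range]
  refine Finset.sum_congr rfl fun i _ => ?_
  norm_cast

lemma gH1_range (n : ℕ) : gH 1 n = ∑ i ∈ range n, ((i:ℝ) + 1)⁻¹ := by
  rw [gH_range]
  refine Finset.sum_congr rfl fun i _ => ?_
  norm_num

lemma gH_nonneg (p : ℤ) (n : ℕ) : 0 ≤ gH p n := by
  rw [gH_range]
  apply Finset.sum_nonneg
  intro i _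
  positivity

lemma summable_inv_pow (p : ℕ) (hp : 2 ≤ p) :
    Summable (fun k : ℕ => (((k:ℝ) + 1) ^ p)⁻¹) := by
  have h := (Real.summable_one_div_nat_pow (p := p)).mpr hp
  have h2 := (summable_nat_add_iff 1).mpr h
  refine h2.congr fun k => ?_
  push_cast
  rw [one_div]

lemma hasSum_Z2 : HasSum (fun k : ℕ => (((k:ℝ) + 1) ^ 2)⁻¹) (π ^ 2 / 6) := by
  have h := hasSum_zeta_two
  have h2 : HasSum (fun n : ℕ => 1 / ((n + 1 : ℕ):ℝ)^2) (π^2/6) :=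
    (hasSum_nat_add_iff (f := fun n : ℕ => 1/(n:ℝ)^2) 1).mpr (by simpa using h)
  have heq : (fun n : ℕ => 1 / ((n + 1 : ℕ):ℝ)^2) = fun k : ℕ => (((k:ℝ) + 1) ^ 2)⁻¹ := by
    funext k; push_cast; rw [one_div]
  rwa [heq] at h2

lemma tsum_pnat_eq (f : ℕ → ℝ) : ∑' n : ℕ+, f (n : ℕ) = ∑' k : ℕ, f (k + 1) := by
  rw [← Equiv.pnatEquivNat.symm.tsum_eq (fun n : ℕ+ => f (n : ℕ))]
  exact tsum_congr fun k => by simp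

lemma zv3_eq : zv 3 = ∑' k : ℕ, (((k:ℝ) + 1) ^ 3)⁻¹ := by
  rw [zv, tsum_pnat_eq (fun n : ℕ => (((n:ℕ):ℝ) ^ (3:ℤ))⁻¹)]
  refine tsum_congr fun k => ?_
  rw [show (3:ℤ) = ((3:ℕ):ℤ) from rfl, zpow_natCast]
  push_cast
  ring_nf

lemma hasSum_Z3 : HasSum (fun k : ℕ => (((k:ℝ) + 1) ^ 3)⁻¹) (zv 3) := by
  rw [zv3_eq]
  exact (summable_inv_pow 3 (by norm_num)).hasSum

lemma hasSum_mu1 (a : ℕ) (ha : 1 ≤ a) :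
    HasSum (fun k : ℕ => (((k:ℝ)+1) * ((k:ℝ)+1+(a:ℝ)))⁻¹) (gH 1 a / a) := by
  have hα : (0:ℝ) < a := by exact_mod_cast ha
  set f : ℕ → ℝ := fun k => ((k:ℝ)+1)⁻¹ with hf
  have hpartial : ∀ N : ℕ, ∑ k ∈ range N, (f k - f (k+a))
      = gH 1 a - ∑ k ∈ range a, f (N+k) := by
    intro N
    rw [Finset.sum_sub_distrib]
    have h1 : ∑ k ∈ range N, f (k+a) = ∑ k ∈ range (a+N), f k - ∑ k ∈ range a, f k := by
      rw [Finset.sum_range_add f a N, eq_sub_iff_add_eq]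
      rw [add_comm]
      congr 1
      exact Finset.sum_congr rfl fun k _ => by rw [add_comm]
    have h2 : ∑ k ∈ range (a+N), f k = ∑ k ∈ range N, f k + ∑ k ∈ range a, f (N+k) := by
      rw [add_comm a N, Finset.sum_range_add f N a]
    rw [h1, h2, gH1_range]
    simp [hf]
    ring
  have hE : Tendsto (fun N : ℕ => ∑ k ∈ range a, f (N+k)) atTop (𝓝 0) := by
    have hb : ∀ N : ℕ, ∑ k ∈ range a, f (N+k) ≤ (a:ℝ) * (1 / ((N:ℝ)+1)) := by
      intro N
      calc ∑ k ∈ range a, f (N+k) ≤ ∑ _k ∈ range a, (1 / ((N:ℝ)+1)) := by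
            apply Finset.sum_le_sum
            intro k _
            rw [hf, one_div]
            apply inv_anti₀ (by positivity)
            push_cast
            linarith [Nat.cast_nonneg (α := ℝ) k]
        _ = (a:ℝ) * (1 / ((N:ℝ)+1)) := by
            rw [Finset.sum_const, Finset.card_range]
            simp
    have h0 : ∀ N : ℕ, 0 ≤ ∑ k ∈ range a, f (N+k) := by
      intro N
      apply Finset.sum_nonneg
      intro k _
      rw [hf]
      positivity
    have hgoal : Tendsto (fun N : ℕ => (a:ℝ) * (1 / ((N:ℝ)+1))) atTop (𝓝 0) := by
      have := tendsto_one_div_add_atTop_nhds_zero_nat.const_mul (a:ℝ)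
      simpa using this
    exact squeeze_zero h0 hb hgoal
  have hTend : Tendsto (fun N : ℕ => ∑ k ∈ range N, (f k - f (k+a))) atTop (𝓝 (gH 1 a)) := by
    simp only [hpartial]
    have := (tendsto_const_nhds (x := gH 1 a) (f := atTop (α := ℕ))).sub hE
    simpa using this
  have hnn : ∀ k : ℕ, 0 ≤ f k - f (k+a) := by
    intro k
    rw [hf]
    simp only [sub_nonneg]
    apply inv_anti₀ (by positivity)
    push_cast
    linarith [Nat.cast_nonneg (α := ℝ) a]
  have hHS : HasSum (fun k : ℕ => f k - f (k+a)) (gH 1 a) :=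
    (hasSum_iff_tendsto_nat_of_nonneg hnn _).mpr hTend
  have h := hHS.mul_left (1/(a:ℝ))
  have heq : (fun k : ℕ => (1/(a:ℝ)) * (f k - f (k+a)))
      = fun k : ℕ => (((k:ℝ)+1) * ((k:ℝ)+1+(a:ℝ)))⁻¹ := by
    funext k
    rw [hf]
    have h1 : (0:ℝ) < (k:ℝ)+1 := by positivity
    have h2 : (0:ℝ) < (k:ℝ)+1+(a:ℝ) := by positivity
    push_cast
    rw [mul_inv]
    field_simp
    ring
  rw [heq] at h
  rwa [show gH 1 a / (a:ℝ) = 1/(a:ℝ) * gH 1 a by ring]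

lemma hasSum_mu_step (r : ℕ) (a : ℕ) (ha : 1 ≤ a) (M Z : ℝ)
    (hM : HasSum (fun k : ℕ => (((k:ℝ)+1)^r * ((k:ℝ)+1+(a:ℝ)))⁻¹) M)
    (hZ : HasSum (fun k : ℕ => (((k:ℝ)+1)^(r+1))⁻¹) Z) :
    HasSum (fun k : ℕ => (((k:ℝ)+1)^(r+1) * ((k:ℝ)+1+(a:ℝ)))⁻¹) ((Z - M)/a) := by
  have hα : (0:ℝ) < a := by exact_mod_cast ha
  have h := (hZ.sub hM).mul_left (1/(a:ℝ))
  have heq : (fun k : ℕ => (1/(a:ℝ)) * ((((k:ℝ)+1)^(r+1))⁻¹ - (((k:ℝ)+1)^r * ((k:ℝ)+1+(a:ℝ)))⁻¹))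
      = fun k : ℕ => (((k:ℝ)+1)^(r+1) * ((k:ℝ)+1+(a:ℝ)))⁻¹ := by
    funext k
    have h1 : (0:ℝ) < (k:ℝ)+1 := by positivity
    have h2 : (0:ℝ) < (k:ℝ)+1+(a:ℝ) := by positivity
    field_simp
    ring
  rw [heq] at h
  rwa [show (Z - M) / (a:ℝ) = 1/(a:ℝ) * (Z - M) by ring]

lemma hasSum_mu3 (a : ℕ) (ha : 1 ≤ a) :
    HasSum (fun k : ℕ => (((k:ℝ)+1)^3 * ((k:ℝ)+1+(a:ℝ)))⁻¹)
      (gH 1 a / (a:ℝ)^3 + zv 3 / a - (π^2/6) / (a:ℝ)^2) := by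
  have hα : (0:ℝ) < a := by exact_mod_cast ha
  have h1 := hasSum_mu1 a ha
  have h1' : HasSum (fun k : ℕ => (((k:ℝ)+1)^1 * ((k:ℝ)+1+(a:ℝ)))⁻¹) (gH 1 a / a) := by
    have heq : (fun k : ℕ => (((k:ℝ)+1) * ((k:ℝ)+1+(a:ℝ)))⁻¹)
        = (fun k : ℕ => (((k:ℝ)+1)^1 * ((k:ℝ)+1+(a:ℝ)))⁻¹) := by
      funext k; rw [pow_one]
    rwa [heq] at h1
  have h2 := hasSum_mu_step 1 a ha _ _ h1' hasSum_Z2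
  have h3 := hasSum_mu_step 2 a ha _ _ h2 hasSum_Z3
  convert h3 using 1
  field_simp
  ring


lemma partial_sum_eq (m' L N : ℕ) :
    ∑ k ∈ range N, gH 3 (k+1) * F (k+m'+1) (L+1)
      = ∑ i ∈ range N, ((((i:ℝ)+1))^(3:ℕ))⁻¹ * F (i+m'+1) L
        - (∑ i ∈ range N, ((((i:ℝ)+1))^(3:ℕ))⁻¹) * F (N+m'+1) L := by
  have step1 : ∀ k ∈ range N, gH 3 (k+1) * F (k+m'+1) (L+1)
      = ∑ i ∈ range (k+1), ((((i:ℝ)+1))^(3:ℕ))⁻¹ * F (k+m'+1) (L+1) := by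
    intro k _
    rw [gH3_range, Finset.sum_mul]
  rw [Finset.sum_congr rfl step1]
  rw [Finset.sum_comm' (t' := range N) (s' := fun i => Finset.Ico i N)
    (by intro k i; simp only [Finset.mem_range, Finset.mem_Ico]; omega)]
  have step3 : ∀ i ∈ range N, ∑ k ∈ Finset.Ico i N, ((((i:ℝ)+1))^(3:ℕ))⁻¹ * F (k+m'+1) (L+1)
      = ((((i:ℝ)+1))^(3:ℕ))⁻¹ * (F (i+m'+1) L - F (N+m'+1) L) := by
    intro i hi
    rw [Finset.mem_range] at hi
    rw [← Finset.mul_sum]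
    congr 1
    rw [Finset.sum_Ico_eq_sum_range]
    have hterm : ∀ j ∈ range (N-i), F ((i+j)+m'+1) (L+1)
        = F ((i+j)+m'+1) L - F ((i+(j+1))+m'+1) L := by
      intro j _
      rw [F_succ]
      congr 2
      omega
    rw [Finset.sum_congr rfl hterm,
      Finset.sum_range_sub' (fun j => F ((i+j)+m'+1) L) (N-i)]
    congr 3
    omega
  rw [Finset.sum_congr rfl step3, Finset.sum_mul]
  rw [← Finset.sum_sub_distrib]
  congr 1
  funext i
  ring

lemma hasSum_LHS (m' L : ℕ) :
    HasSum (fun k : ℕ => gH 3 (k+1) * F (k+m'+1) (L+1))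
      (∑' i : ℕ, ((((i:ℝ)+1))^(3:ℕ))⁻¹ * F (i+m'+1) L) := by
  have hu : Summable (fun i : ℕ => ((((i:ℝ)+1))^(3:ℕ))⁻¹) := summable_inv_pow 3 (by norm_num)
  have hsummable : Summable (fun i : ℕ => ((((i:ℝ)+1))^(3:ℕ))⁻¹ * F (i+m'+1) L) := by
    apply Summable.of_nonneg_of_le _ _ hu
    · intro i
      exact mul_nonneg (by positivity) (F_nonneg _ _)
    · intro i
      have h1 : F (i+m'+1) L ≤ 1 := by
        refine (F_le _ _).trans ?_
        rw [show ((1:ℝ)) = 1⁻¹ by norm_num]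
        apply inv_anti₀ (by norm_num)
        push_cast
        linarith [Nat.cast_nonneg (α := ℝ) (i+m'+1)]
      calc ((((i:ℝ)+1))^(3:ℕ))⁻¹ * F (i+m'+1) L ≤ ((((i:ℝ)+1))^(3:ℕ))⁻¹ * 1 :=
            mul_le_mul_of_nonneg_left h1 (by positivity)
        _ = ((((i:ℝ)+1))^(3:ℕ))⁻¹ := by ring
  rw [hasSum_iff_tendsto_nat_of_nonneg
    (fun k => mul_nonneg (gH_nonneg 3 (k+1)) (F_nonneg _ _))]
  have h1 : Tendsto (fun N : ℕ => ∑ i ∈ range N, ((((i:ℝ)+1))^(3:ℕ))⁻¹ * F (i+m'+1) L)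
      atTop (𝓝 (∑' i : ℕ, ((((i:ℝ)+1))^(3:ℕ))⁻¹ * F (i+m'+1) L)) :=
    hsummable.hasSum.tendsto_sum_nat
  have hF : Tendsto (fun N : ℕ => F (N+m'+1) L) atTop (𝓝 0) := by
    have hb : ∀ N : ℕ, F (N+m'+1) L ≤ 1 / ((N:ℝ)+1) := by
      intro N
      refine (F_le _ _).trans ?_
      rw [one_div]
      apply inv_anti₀ (by positivity)
      push_cast
      linarith [Nat.cast_nonneg (α := ℝ) m']
    exact squeeze_zero (fun N => F_nonneg _ _) hb tendsto_one_div_add_atTop_nhds_zero_nat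
  have hU : Tendsto (fun N : ℕ => ∑ i ∈ range N, ((((i:ℝ)+1))^(3:ℕ))⁻¹)
      atTop (𝓝 (∑' i : ℕ, ((((i:ℝ)+1))^(3:ℕ))⁻¹)) := hu.hasSum.tendsto_sum_nat
  have hprod := hU.mul hF
  rw [mul_zero] at hprod
  have := h1.sub hprod
  rw [sub_zero] at this
  refine this.congr fun N => ?_
  rw [partial_sum_eq]

end Stmt12Aux

open Stmt12Aux in
/-- The case `p = 3`. -/
theorem stmt_12 (m l : ℕ) (hm : 1 ≤ m) (hl : 1 ≤ l) :
    ∑' n : ℕ+, gH 3 n / (((n : ℝ) + m) * ((((n : ℕ) + m + l).choose l : ℕ) : ℝ))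
      = ∑ j ∈ Finset.range l,
          (-1 : ℝ) ^ j * ((l - 1).choose j : ℝ) * gH 1 (m + j) / ((m : ℝ) + j) ^ 3
        + (1 / ((m : ℝ) * (((m + l - 1).choose (l - 1) : ℕ) : ℝ))) *
            (zv 3 - Real.pi ^ 2 / 6 * (gH 1 (m + l - 1) - gH 1 (m - 1))) := by
  obtain ⟨m', rfl⟩ : ∃ m', m = m' + 1 := ⟨m-1, by omega⟩
  obtain ⟨L, rfl⟩ : ∃ L, l = L + 1 := ⟨l-1, by omega⟩
  clear hm hl
  set x : ℝ := ((m' + 1 : ℕ) : ℝ) with hxdef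
  have hx : (0:ℝ) < x := by rw [hxdef]; positivity
  -- Step 1 : rewrite the LHS as a tsum over ℕ
  rw [← Equiv.pnatEquivNat.symm.tsum_eq]
  have step1 : ∀ k : ℕ,
      (fun n : ℕ+ => gH 3 n / (((n : ℝ) + ((m'+1:ℕ):ℝ)) *
        ((((n : ℕ) + (m'+1) + (L+1)).choose (L+1) : ℕ) : ℝ))) (Equiv.pnatEquivNat.symm k)
      = gH 3 (k+1) * F (k+m'+1) (L+1) := by
    intro k
    have hco : ((Equiv.pnatEquivNat.symm k : ℕ+) : ℕ) = k + 1 := by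
      simp [Equiv.pnatEquivNat]
    simp only [hco]
    rw [div_eq_mul_inv]
    congr 1
    rw [show (k+1) + (m'+1) + (L+1) = (k+m'+1) + 1 + (L+1) by omega, ← inv_eq_F]
    congr 2
    · push_cast; ring
  rw [tsum_congr step1, (hasSum_LHS m' L).tsum_eq]
  -- Step 2 : expand F via partial fractions
  have hDi : ∀ i : ℕ, ((((i:ℝ)+1))^(3:ℕ))⁻¹ * F (i+m'+1) L
      = ∑ j ∈ range (L+1), (-1:ℝ)^j * ((L.choose j : ℕ):ℝ) *
          ((((i:ℝ)+1))^3 * (((i:ℝ)+1)+((m'+1+j:ℕ):ℝ)))⁻¹ := by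
    intro i
    have hPF := PF1 L (((i:ℝ)+1)+x) (by positivity)
    have hF : F (i+m'+1) L = ∑ j ∈ range (L+1), (-1:ℝ)^j * ((L.choose j : ℕ):ℝ) *
        ((((i:ℝ)+1)+x) + j)⁻¹ := by
      rw [F_eq_prod, hPF]
      congr 1
      refine Finset.prod_congr rfl fun j _ => ?_
      rw [hxdef]; push_cast; ring
    rw [hF, Finset.mul_sum]
    refine Finset.sum_congr rfl fun j hj => ?_
    rw [mul_inv, hxdef]
    push_cast
    ring
  rw [tsum_congr hDi]
  have hsumm : ∀ j ∈ range (L+1), Summable (fun i : ℕ => (-1:ℝ)^j * ((L.choose j : ℕ):ℝ) *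
      ((((i:ℝ)+1))^3 * (((i:ℝ)+1)+((m'+1+j:ℕ):ℝ)))⁻¹) := by
    intro j _
    exact ((hasSum_mu3 (m'+1+j) (by omega)).summable).mul_left _
  rw [Summable.tsum_finsetSum hsumm]
  have hval : ∀ j ∈ range (L+1),
      ∑' i : ℕ, (-1:ℝ)^j * ((L.choose j : ℕ):ℝ) *
        ((((i:ℝ)+1))^3 * (((i:ℝ)+1)+((m'+1+j:ℕ):ℝ)))⁻¹
      = (-1:ℝ)^j * ((L.choose j : ℕ):ℝ) *
          (gH 1 (m'+1+j) / ((m'+1+j:ℕ):ℝ)^3 + zv 3 / ((m'+1+j:ℕ):ℝ)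
            - (π^2/6) / ((m'+1+j:ℕ):ℝ)^2) := by
    intro j _
    exact ((hasSum_mu3 (m'+1+j) (by omega)).mul_left _).tsum_eq
  rw [Finset.sum_congr rfl hval]
  -- Step 3 : split the sum into three parts
  have hsplit : ∀ j ∈ range (L+1),
      (-1:ℝ)^j * ((L.choose j : ℕ):ℝ) *
          (gH 1 (m'+1+j) / ((m'+1+j:ℕ):ℝ)^3 + zv 3 / ((m'+1+j:ℕ):ℝ)
            - (π^2/6) / ((m'+1+j:ℕ):ℝ)^2)
      = (-1:ℝ)^j * ((L.choose j : ℕ):ℝ) * gH 1 (m'+1+j) / (x + (j:ℝ))^3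
        + zv 3 * ((-1:ℝ)^j * ((L.choose j : ℕ):ℝ) * (x + (j:ℝ))⁻¹)
        - (π^2/6) * ((-1:ℝ)^j * ((L.choose j : ℕ):ℝ) * ((x + (j:ℝ))^2)⁻¹) := by
    intro j _
    rw [hxdef]
    push_cast
    ring
  rw [Finset.sum_congr rfl hsplit, Finset.sum_sub_distrib, Finset.sum_add_distrib,
    ← Finset.mul_sum, ← Finset.mul_sum, PF1 L x hx, PF2 L x hx]
  -- Step 4 : identify the closed forms
  have hFP : (Nat.factorial L : ℝ) / ∏ j ∈ range (L+1), (x + (j:ℝ))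
      = (x * (((m'+1+L).choose L : ℕ):ℝ))⁻¹ := by
    have h1 := F_eq_prod m' L
    have h2 := inv_eq_F m' L
    rw [show ((m':ℝ)+1) = x by rw [hxdef]; push_cast; ring] at h2
    rw [h2, h1]
    congr 1
    refine Finset.prod_congr rfl fun j _ => ?_
    rw [hxdef]; push_cast; ring
  have hgap : ∑ i ∈ range (L+1), (x + (i:ℝ))⁻¹ = gH 1 (m'+1+L) - gH 1 m' := by
    rw [gH1_range, gH1_range, show m'+1+L = m' + (L+1) by omega,
      Finset.sum_range_add (fun i : ℕ => ((i:ℝ)+1)⁻¹) m' (L+1)]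
    rw [add_sub_cancel_left]
    refine Finset.sum_congr rfl fun i _ => ?_
    rw [hxdef]; push_cast; ring
  rw [hFP, hgap]
  -- Step 5 : final form
  have e1 : (L+1) - 1 = L := rfl
  have e2 : m'+1+(L+1)-1 = m'+1+L := rfl
  have e3 : m'+1-1 = m' := rfl
  rw [e1, e2, e3]
  have hsum1 : ∑ j ∈ range (L+1),
      (-1:ℝ)^j * ((L.choose j : ℕ):ℝ) * gH 1 (m'+1+j) / (x + (j:ℝ))^3
      = ∑ j ∈ range (L+1),
          (-1 : ℝ) ^ j * ((L.choose j : ℕ) : ℝ) * gH 1 ((m'+1) + j) / (((m'+1:ℕ) : ℝ) + j) ^ 3 := by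
    refine Finset.sum_congr rfl fun j _ => ?_
    rw [hxdef]
  rw [hsum1]
  ring
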